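/- Let α ≥ 2. Then (C(α)/(1+2α))·(1 − 1/√α) ≤ H₁(α,α) ≤ sup_{x ∈ [0,∞)} H₁(α,x) ≤ (C(α)/(1+2α))·(1 + 2/√α), where C(α) = ∫₀^∞ t^α / sinh t dt and H₁(α,x) = ∫₀^∞ (t^α / sinh t) · x/(x² + t²) dt for x > 0 (with H₁(α,0) = 0 for α > 1). -/

import Mathlib

open MeasureTheory Filter Real

/-- `C(α) = ∫₀^∞ t^α / sinh t dt`. -/
noncomputable def Cconst (α : ℝ) : ℝ :=
  ∫ t in Set.Ioi (0:ℝ), t ^ α / Real.sinh t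

/-- `H₁(α,x) = ∫₀^∞ (t^α / sinh t) · x/(x²+t²) dt` (equal to `0` at `x = 0`). -/
noncomputable def H1fun (α x : ℝ) : ℝ :=
  ∫ t in Set.Ioi (0:ℝ), t ^ α / Real.sinh t * (x / (x ^ 2 + t ^ 2))

open Set Topology

namespace Stmt3Aux

lemma sinh_lower {t : ℝ} (ht : 0 < t) : t * Real.exp t ≤ 2 * (1 + t) * Real.sinh t := by
  rw [Real.sinh_eq]
  have h3 : Real.exp (-t) * Real.exp t = 1 := by rw [← Real.exp_add]; simp
  have h1 := Real.add_one_le_exp t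
  nlinarith [Real.exp_pos t, Real.exp_pos (-t)]

lemma contOnW (β : ℝ) : ContinuousOn (fun t : ℝ => t ^ β / Real.sinh t) (Ioi (0:ℝ)) := by
  apply ContinuousOn.div
  · exact fun t ht => (Real.continuousAt_rpow_const t β (Or.inl (ne_of_gt ht))).continuousWithinAt
  · exact Real.continuous_sinh.continuousOn
  · exact fun t ht => ne_of_gt (Real.sinh_pos_iff.mpr ht)

lemma wnonneg {β t : ℝ} (ht : t ∈ Ioi (0:ℝ)) : 0 ≤ t ^ β / Real.sinh t :=
  div_nonneg (Real.rpow_nonneg (le_of_lt ht) β) (Real.sinh_pos_iff.mpr ht).le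

lemma w_le {β t : ℝ} (hβ : 0 < β) (ht : t ∈ Ioi (0:ℝ)) :
    t ^ β / Real.sinh t ≤ 2 * (Real.exp (-t) * t ^ (β - 1)) + 2 * (Real.exp (-t) * t ^ β) := by
  have ht' : (0:ℝ) < t := ht
  have hS := Real.sinh_pos_iff.mpr ht'
  have hb : t ^ β = t ^ (β - 1) * t := by
    rw [← Real.rpow_add_one (ne_of_gt ht') (β - 1)]; ring_nf
  have hE : Real.exp (-t) * Real.exp t = 1 := by rw [← Real.exp_add]; simp
  rw [div_le_iff₀ hS, hb]
  have h1 := sinh_lower ht'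
  have h2 : (0:ℝ) ≤ t ^ (β - 1) := Real.rpow_nonneg ht'.le _
  have h3 : (0:ℝ) < Real.exp (-t) := Real.exp_pos _
  have h4 : Real.exp (-t) * t ^ (β - 1) * (t * Real.exp t) = t ^ (β - 1) * t := by
    calc Real.exp (-t) * t ^ (β - 1) * (t * Real.exp t)
        = (Real.exp (-t) * Real.exp t) * (t ^ (β - 1) * t) := by ring
      _ = t ^ (β - 1) * t := by rw [hE, one_mul]
  nlinarith [mul_le_mul_of_nonneg_left h1 (mul_nonneg h3.le h2)]

lemma integrableW {β : ℝ} (hβ : 0 < β) :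
    IntegrableOn (fun t : ℝ => t ^ β / Real.sinh t) (Ioi (0:ℝ)) := by
  have h1 : IntegrableOn (fun t : ℝ => Real.exp (-t) * t ^ (β - 1)) (Ioi (0:ℝ)) :=
    Real.GammaIntegral_convergent hβ
  have h2 : IntegrableOn (fun t : ℝ => Real.exp (-t) * t ^ β) (Ioi (0:ℝ)) := by
    have := Real.GammaIntegral_convergent (by linarith : (0:ℝ) < β + 1)
    simpa using this
  refine Integrable.mono' (((h1.const_mul 2).add (h2.const_mul 2))) 
    ((contOnW β).aestronglyMeasurable measurableSet_Ioi) ?_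
  refine (ae_restrict_iff' measurableSet_Ioi).mpr (ae_of_all _ fun t ht => ?_)
  rw [Real.norm_eq_abs, abs_of_nonneg (wnonneg ht)]
  exact w_le hβ ht



lemma gammaInt (α : ℝ) (hα : 0 < α) :
    Real.Gamma (α + 1) = ∫ t in Ioi (0:ℝ), Real.exp (-t) * t ^ α := by
  rw [Real.Gamma_eq_integral (by linarith : (0:ℝ) < α + 1)]
  simp

lemma exp2Int (α : ℝ) (hα : 0 < α) :
    ∫ t in Ioi (0:ℝ), t ^ α * Real.exp (-(2*t)) = (2:ℝ) ^ (-(α+1)) * Real.Gamma (α + 1) := by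
  have h := integral_rpow_mul_exp_neg_mul_rpow (p := 1) (q := α) (b := 2)
    one_pos (by linarith) two_pos
  simp only [Real.rpow_one, div_one, one_div] at h
  calc ∫ t in Ioi (0:ℝ), t ^ α * Real.exp (-(2*t))
      = ∫ t in Ioi (0:ℝ), t ^ α * Real.exp (-2 * t) := by
        refine setIntegral_congr_fun measurableSet_Ioi fun t ht => ?_
        ring_nf
    _ = (2:ℝ) ^ (-(α+1)) * Real.Gamma (α + 1) := by rw [h]; ring


lemma gammaIntegrable {β : ℝ} (hβ : 0 < β) :
    IntegrableOn (fun t : ℝ => Real.exp (-t) * t ^ β) (Ioi (0:ℝ)) := by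
  have := Real.GammaIntegral_convergent (by linarith : (0:ℝ) < β + 1)
  simpa using this

lemma C_ge {α : ℝ} (hα : 1 ≤ α) : 2 * Real.Gamma (α + 1) ≤ Cconst α := by
  have h0 : (0:ℝ) < α := by linarith
  rw [gammaInt α h0, ← integral_const_mul]
  refine setIntegral_mono_on ((gammaIntegrable h0).const_mul 2) (integrableW h0)
    measurableSet_Ioi fun t ht => ?_
  have ht' : (0:ℝ) < t := ht
  have hS := Real.sinh_pos_iff.mpr ht'
  have hE : Real.exp (-t) * Real.exp t = 1 := by rw [← Real.exp_add]; simp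
  have h2 : (0:ℝ) ≤ t ^ α := Real.rpow_nonneg ht'.le _
  rw [le_div_iff₀ hS, Real.sinh_eq]
  have expand : 2 * (Real.exp (-t) * t ^ α) * ((Real.exp t - Real.exp (-t)) / 2)
      = t ^ α * (1 - Real.exp (-t) * Real.exp (-t)) := by
    linear_combination t ^ α * hE
  rw [expand]
  nlinarith [mul_nonneg h2 (mul_nonneg (Real.exp_pos (-t)).le (Real.exp_pos (-t)).le)]

lemma C_le {α : ℝ} (hα : 1 ≤ α) :
    Cconst α ≤ 2 * Real.Gamma (α + 1) + Real.Gamma α := by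
  have h0 : (0:ℝ) < α := by linarith
  have hgι : Real.Gamma α = ∫ t in Ioi (0:ℝ), Real.exp (-t) * t ^ (α - 1) :=
    Real.Gamma_eq_integral h0
  rw [gammaInt α h0, hgι, ← integral_const_mul, ← integral_add
    ((gammaIntegrable h0).const_mul 2) (Real.GammaIntegral_convergent h0)]
  refine setIntegral_mono_on (integrableW h0)
    (((gammaIntegrable h0).const_mul 2).add (Real.GammaIntegral_convergent h0))
    measurableSet_Ioi fun t ht => ?_
  have ht' : (0:ℝ) < t := ht
  have hS := Real.sinh_pos_iff.mpr ht'
  have hE : Real.exp (-t) * Real.exp t = 1 := by rw [← Real.exp_add]; simp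
  have hb : t ^ α = t ^ (α - 1) * t := by
    rw [← Real.rpow_add_one (ne_of_gt ht') (α - 1)]; ring_nf
  have h2 : (0:ℝ) ≤ t ^ (α - 1) := Real.rpow_nonneg ht'.le _
  have h2' := Real.add_one_le_exp (2*t)
  have hE2 : Real.exp (2*t) = Real.exp t * Real.exp t := by
    rw [← Real.exp_add]; ring_nf
  rw [hE2] at h2'
  have key : (2*t+1) * (Real.exp (-t) * Real.exp (-t)) * t ^ (α-1) ≤ t ^ (α-1) := by
    have h1 : (2*t+1) * (Real.exp (-t) * Real.exp (-t)) * t ^ (α-1)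
        ≤ (Real.exp t * Real.exp t) * (Real.exp (-t) * Real.exp (-t)) * t ^ (α-1) := by
      apply mul_le_mul_of_nonneg_right _ h2
      exact mul_le_mul_of_nonneg_right h2' (by positivity)
    have h3 : (Real.exp t * Real.exp t) * (Real.exp (-t) * Real.exp (-t)) = 1 := by
      linear_combination (Real.exp (-t) * Real.exp t + 1) * hE
    rw [h3, one_mul] at h1
    exact h1
  rw [div_le_iff₀ hS, Real.sinh_eq, hb]
  have expand : (2 * (Real.exp (-t) * (t ^ (α-1) * t)) + Real.exp (-t) * t ^ (α-1))
        * ((Real.exp t - Real.exp (-t)) / 2)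
      = t ^ (α-1) * (2*t+1) / 2 - (2*t+1) * (Real.exp (-t) * Real.exp (-t)) * t ^ (α-1) / 2 := by
    linear_combination (t ^ (α-1) * (2*t+1) / 2) * hE
  rw [expand]
  nlinarith [key, mul_nonneg h2 ht'.le]

lemma cosh_sinh_exp (t : ℝ) : Real.cosh t = Real.sinh t + Real.exp (-t) := by
  rw [Real.cosh_eq, Real.sinh_eq]; ring

lemma coth_bound {t : ℝ} (ht : 0 < t) : t * Real.cosh t ≤ (1 + t) * Real.sinh t := by
  rw [cosh_sinh_exp]
  have h1 : t ≤ Real.sinh t := Real.self_le_sinh_iff.mpr ht.le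
  have h2 : Real.exp (-t) ≤ 1 := Real.exp_le_one_iff.mpr (by linarith)
  nlinarith [Real.exp_pos (-t)]

lemma contOnTerm2 (β : ℝ) :
    ContinuousOn (fun t : ℝ => t ^ (β+1) * Real.cosh t / Real.sinh t ^ 2) (Ioi (0:ℝ)) := by
  apply ContinuousOn.div
  · exact ContinuousOn.mul
      (fun t ht => (Real.continuousAt_rpow_const t (β+1) (Or.inl (ne_of_gt ht))).continuousWithinAt)
      Real.continuous_cosh.continuousOn
  · exact (Real.continuous_sinh.pow 2).continuousOn
  · exact fun t ht => pow_ne_zero 2 (ne_of_gt (Real.sinh_pos_iff.mpr ht))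

lemma term2_le {β t : ℝ} (ht : (0:ℝ) < t) :
    t ^ (β+1) * Real.cosh t / Real.sinh t ^ 2
      ≤ t ^ β / Real.sinh t + t ^ (β+1) / Real.sinh t := by
  have hS := Real.sinh_pos_iff.mpr ht
  have hb : t ^ (β+1) = t ^ β * t := Real.rpow_add_one (ne_of_gt ht) β
  have h2 : (0:ℝ) ≤ t ^ β := Real.rpow_nonneg ht.le _
  rw [← add_div, div_le_div_iff₀ (by positivity) hS, hb]
  have := coth_bound ht
  nlinarith [mul_le_mul_of_nonneg_left this h2, sq_nonneg (Real.sinh t)]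

lemma term2_integrable {β : ℝ} (hβ : 1 ≤ β) :
    IntegrableOn (fun t : ℝ => t ^ (β+1) * Real.cosh t / Real.sinh t ^ 2) (Ioi (0:ℝ)) := by
  have h0 : (0:ℝ) < β := by linarith
  refine Integrable.mono' ((integrableW h0).add (integrableW (by linarith : (0:ℝ) < β + 1)))
    ((contOnTerm2 β).aestronglyMeasurable measurableSet_Ioi) ?_
  refine (ae_restrict_iff' measurableSet_Ioi).mpr (ae_of_all _ fun t ht => ?_)
  have ht' : (0:ℝ) < t := ht
  rw [Real.norm_eq_abs, abs_of_nonneg (div_nonneg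
    (mul_nonneg (Real.rpow_nonneg ht'.le _) (Real.cosh_pos t).le) (sq_nonneg _))]
  exact term2_le ht'

lemma ibp {β : ℝ} (hβ : 1 ≤ β) :
    (β+1) * Cconst β = ∫ t in Ioi (0:ℝ), t ^ (β+1) * Real.cosh t / Real.sinh t ^ 2 := by
  have h0 : (0:ℝ) < β := by linarith
  set f : ℝ → ℝ := fun t => t ^ (β+1) / Real.sinh t with hf
  set g : ℝ → ℝ := fun t =>
    (β+1) * (t ^ β / Real.sinh t) - t ^ (β+1) * Real.cosh t / Real.sinh t ^ 2 with hg
  have hf0 : f 0 = 0 := by simp only [hf]; rw [Real.sinh_zero, div_zero]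
  have hderiv : ∀ x ∈ Ioi (0:ℝ), HasDerivAt f (g x) x := by
    intro x hx
    have hx' : (0:ℝ) < x := hx
    have hS : Real.sinh x ≠ 0 := ne_of_gt (Real.sinh_pos_iff.mpr hx')
    have hp : HasDerivAt (fun t : ℝ => t ^ (β+1)) ((β+1) * x ^ β) x := by
      have h := Real.hasDerivAt_rpow_const (x := x) (p := β+1) (Or.inl (ne_of_gt hx'))
      simpa [add_sub_cancel_right] using h
    have hd := hp.div (Real.hasDerivAt_sinh x) hS
    refine hd.congr_deriv ?_
    rw [hg]
    field_simp
  have hcont : ContinuousWithinAt f (Ici (0:ℝ)) 0 := by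
    unfold ContinuousWithinAt
    rw [hf0]
    have hg0 : Tendsto (fun t : ℝ => t ^ β) (nhdsWithin 0 (Ici 0)) (𝓝 0) := by
      have hc : ContinuousAt (fun t : ℝ => t ^ β) 0 :=
        Real.continuousAt_rpow_const 0 β (Or.inr h0.le)
      have h2 := hc.tendsto
      rw [Real.zero_rpow (ne_of_gt h0)] at h2
      exact h2.mono_left nhdsWithin_le_nhds
    refine tendsto_of_tendsto_of_tendsto_of_le_of_le' tendsto_const_nhds hg0 ?_ ?_
    · filter_upwards [self_mem_nhdsWithin] with t ht
      rcases eq_or_lt_of_le (Set.mem_Ici.mp ht) with h|h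
      · simp only [hf]; rw [← h, Real.sinh_zero, div_zero]
      · exact div_nonneg (Real.rpow_nonneg h.le _) (Real.sinh_pos_iff.mpr h).le
    · filter_upwards [self_mem_nhdsWithin] with t ht
      rcases eq_or_lt_of_le (Set.mem_Ici.mp ht) with h|h
      · simp only [hf]; rw [← h, Real.sinh_zero, div_zero, Real.zero_rpow (ne_of_gt h0)]
      · have hS := Real.sinh_pos_iff.mpr h
        have hb : t ^ (β+1) = t ^ β * t := Real.rpow_add_one (ne_of_gt h) β
        simp only [hf]
        rw [div_le_iff₀ hS, hb]
        calc t ^ β * t ≤ t ^ β * Real.sinh t :=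
              mul_le_mul_of_nonneg_left (Real.self_le_sinh_iff.mpr h.le) (Real.rpow_nonneg h.le β)
          _ = t ^ β * Real.sinh t := rfl
  have htop : Tendsto f atTop (𝓝 0) := by
    have h4 : Tendsto (fun t : ℝ => 4 * (t ^ (β+1) * Real.exp (-t))) atTop (𝓝 0) := by
      have h5 := (tendsto_rpow_mul_exp_neg_mul_atTop_nhds_zero (β+1) 1 one_pos).const_mul 4
      simpa using h5
    refine tendsto_of_tendsto_of_tendsto_of_le_of_le' tendsto_const_nhds h4 ?_ ?_
    · filter_upwards [eventually_gt_atTop 0] with t ht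
      exact div_nonneg (Real.rpow_nonneg ht.le _) (Real.sinh_pos_iff.mpr ht).le
    · filter_upwards [eventually_ge_atTop 1] with t ht
      have ht0 : (0:ℝ) < t := by linarith
      have hS := Real.sinh_pos_iff.mpr ht0
      have hE : Real.exp 1 ≤ Real.exp t := Real.exp_le_exp.mpr ht
      have h2 : (2:ℝ) ≤ Real.exp t := le_trans (by nlinarith [Real.add_one_le_exp (1:ℝ)]) hE
      have he : Real.exp (-t) ≤ 1 := Real.exp_le_one_iff.mpr (by linarith)
      have hS4 : Real.exp t ≤ 4 * Real.sinh t := by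
        rw [Real.sinh_eq]; nlinarith [Real.exp_pos (-t)]
      have hEt : Real.exp (-t) * Real.exp t = 1 := by rw [← Real.exp_add]; simp
      have h3 : (0:ℝ) ≤ t ^ (β+1) := Real.rpow_nonneg ht0.le _
      have h6 : t ^ (β+1) * (Real.exp (-t) * Real.exp t) = t ^ (β+1) := by
        rw [hEt, mul_one]
      simp only [hf]
      rw [div_le_iff₀ hS]
      nlinarith [mul_le_mul_of_nonneg_left hS4 (mul_nonneg h3 (Real.exp_pos (-t)).le)]
  have hint2 := term2_integrable hβ
  have hintg : IntegrableOn g (Ioi (0:ℝ)) := ((integrableW h0).const_mul (β+1)).sub hint2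
  have h00 := integral_Ioi_of_hasDerivAt_of_tendsto hcont hderiv hintg htop
  rw [hf0, sub_zero] at h00
  have hsplit : ∫ t in Ioi (0:ℝ), g t
      = (β+1) * Cconst β - ∫ t in Ioi (0:ℝ), t ^ (β+1) * Real.cosh t / Real.sinh t ^ 2 := by
    simp only [hg]
    rw [integral_sub ((integrableW h0).const_mul (β+1)) hint2, integral_const_mul]
    rfl
  rw [hsplit] at h00
  linarith

lemma stepUp {β : ℝ} (hβ : 1 ≤ β) : Cconst (β+1) ≤ (β+1) * Cconst β := by
  rw [ibp hβ]
  have h0 : (0:ℝ) < β + 1 := by linarith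
  refine setIntegral_mono_on (integrableW h0) (term2_integrable hβ) measurableSet_Ioi
    fun t ht => ?_
  have ht' : (0:ℝ) < t := ht
  have hS := Real.sinh_pos_iff.mpr ht'
  have h2 : (0:ℝ) ≤ t ^ (β+1) := Real.rpow_nonneg ht'.le _
  rw [div_le_div_iff₀ hS (by positivity)]
  nlinarith [Real.sinh_lt_cosh (x := t), mul_nonneg h2 hS.le]

lemma exp2Integrable {α : ℝ} (hα : 0 < α) :
    IntegrableOn (fun t : ℝ => t ^ α * Real.exp (-(2*t))) (Ioi (0:ℝ)) := by
  refine Integrable.mono' (gammaIntegrable hα)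
    ?_ ?_
  · apply ContinuousOn.aestronglyMeasurable _ measurableSet_Ioi
    exact ContinuousOn.mul
      (fun t ht => (Real.continuousAt_rpow_const t α (Or.inl (ne_of_gt ht))).continuousWithinAt)
      (Real.continuous_exp.comp (by continuity)).continuousOn
  · refine (ae_restrict_iff' measurableSet_Ioi).mpr (ae_of_all _ fun t ht => ?_)
    have ht' : (0:ℝ) < t := ht
    have h2 : (0:ℝ) ≤ t ^ α := Real.rpow_nonneg ht'.le _
    rw [Real.norm_eq_abs, abs_of_nonneg (mul_nonneg h2 (Real.exp_pos _).le)]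
    rw [mul_comm (Real.exp (-t))]
    exact mul_le_mul_of_nonneg_left (Real.exp_le_exp.mpr (by linarith)) h2

lemma keyPointwise {α t : ℝ} (hα : 2 ≤ α) (ht : (0:ℝ) < t) :
    t ^ α * Real.cosh t / Real.sinh t ^ 2
      ≤ t ^ (α-1) / Real.sinh t + t ^ α / Real.sinh t - 2 * (t ^ α * Real.exp (-(2*t))) := by
  have hS := Real.sinh_pos_iff.mpr ht
  set u := Real.exp (-t) with hu
  have hu0 : (0:ℝ) < u := Real.exp_pos _
  have hu1 : u < 1 := by
    rw [hu, Real.exp_lt_one_iff]; linarith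
  have hE : u * Real.exp t = 1 := by rw [hu, ← Real.exp_add]; simp
  have hu2 : Real.exp (-(2*t)) = u * u := by
    rw [hu, ← Real.exp_add]; ring_nf
  have hST : t ≤ Real.sinh t := Real.self_le_sinh_iff.mpr ht.le
  have huS : 2 * u * Real.sinh t = 1 - u * u := by
    rw [Real.sinh_eq]; linear_combination hE
  have hcosh : Real.cosh t = Real.sinh t + u := by rw [hu]; exact cosh_sinh_exp t
  have K : t * Real.cosh t + 2 * t * Real.exp (-(2*t)) * Real.sinh t ^ 2
      ≤ (1+t) * Real.sinh t := by
    have e1 : 2 * t * Real.exp (-(2*t)) * Real.sinh t ^ 2 = t * (1 - u*u)^2 / 2 := by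
      rw [hu2]
      linear_combination (t * (2 * u * Real.sinh t + (1 - u*u)) / 2) * huS
    rw [e1, hcosh]
    have key2 : u + (1 - u*u)^2 / 2 ≤ 1 := by
      have inner : (0:ℝ) ≤ u^3 + u^2 - u + 1 := by nlinarith [pow_nonneg hu0.le 3, sq_nonneg u]
      nlinarith [mul_nonneg (sub_nonneg.mpr hu1.le) inner]
    nlinarith [mul_le_mul_of_nonneg_left key2 ht.le]
  have hb : t ^ α = t ^ (α-1) * t := by
    rw [← Real.rpow_add_one (ne_of_gt ht) (α - 1)]; ring_nf
  have hnum : (0:ℝ) ≤ t ^ (α-1) := Real.rpow_nonneg ht.le _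
  have expand : t ^ (α-1) / Real.sinh t + t ^ α / Real.sinh t - 2 * (t ^ α * Real.exp (-(2*t)))
        - t ^ α * Real.cosh t / Real.sinh t ^ 2
      = t ^ (α-1) * ((1+t) * Real.sinh t
          - (t * Real.cosh t + 2 * t * Real.exp (-(2*t)) * Real.sinh t ^ 2)) / Real.sinh t ^ 2 := by
    rw [hb]; field_simp; ring
  have hpos : 0 ≤ t ^ (α-1) * ((1+t) * Real.sinh t
      - (t * Real.cosh t + 2 * t * Real.exp (-(2*t)) * Real.sinh t ^ 2)) / Real.sinh t ^ 2 := by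
    apply div_nonneg (mul_nonneg hnum (by linarith)) (sq_nonneg _)
  linarith [expand ▸ hpos]

lemma keyStep {α : ℝ} (hα : 2 ≤ α) :
    (α - 1) * Cconst (α-1) ≤ Cconst α - Real.Gamma (α+1) * 2 ^ (-α) := by
  have h1 : (1:ℝ) ≤ α - 1 := by linarith
  have h0 : (0:ℝ) < α - 1 := by linarith
  have h0' : (0:ℝ) < α := by linarith
  have hibp := ibp h1
  have he : α - 1 + 1 = α := by ring
  rw [he] at hibp
  have hmono : ∫ t in Ioi (0:ℝ), t ^ α * Real.cosh t / Real.sinh t ^ 2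
      ≤ ∫ t in Ioi (0:ℝ),
        (t ^ (α-1) / Real.sinh t + t ^ α / Real.sinh t - 2 * (t ^ α * Real.exp (-(2*t)))) := by
    have hterm2 := term2_integrable h1
    rw [he] at hterm2
    refine setIntegral_mono_on hterm2 ?_ measurableSet_Ioi fun t ht => keyPointwise hα ht
    exact ((integrableW h0).add (integrableW h0')).sub ((exp2Integrable h0').const_mul 2)
  have hsplit : ∫ t in Ioi (0:ℝ),
        (t ^ (α-1) / Real.sinh t + t ^ α / Real.sinh t - 2 * (t ^ α * Real.exp (-(2*t))))
      = Cconst (α-1) + Cconst α - 2 * ((2:ℝ) ^ (-(α+1)) * Real.Gamma (α+1)) := by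
    have hAB : IntegrableOn (fun t : ℝ => t ^ (α-1) / Real.sinh t + t ^ α / Real.sinh t)
        (Ioi (0:ℝ)) := (integrableW h0).add (integrableW h0')
    rw [integral_sub hAB ((exp2Integrable h0').const_mul 2),
      integral_add (integrableW h0) (integrableW h0'), integral_const_mul, exp2Int α h0']
    rfl
  have hpow : 2 * ((2:ℝ) ^ (-(α+1)) * Real.Gamma (α+1)) = Real.Gamma (α+1) * 2 ^ (-α) := by
    have : (2:ℝ) ^ (-(α+1)) * 2 = 2 ^ (-α) := by
      rw [← Real.rpow_add_one (by norm_num : (2:ℝ) ≠ 0) (-(α+1))]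
      ring_nf
    linear_combination Real.Gamma (α+1) * this
  rw [hsplit, hpow] at hmono
  rw [← hibp] at hmono
  linarith

lemma Cnonneg (β : ℝ) : 0 ≤ Cconst β :=
  setIntegral_nonneg measurableSet_Ioi fun _ ht => wnonneg ht

lemma ratioUpper {α : ℝ} (hα : 2 ≤ α) :
    (1 + 2*α) * Cconst (α-1) ≤ (2 + 4 / Real.sqrt α) * Cconst α := by
  have hα0 : (0:ℝ) < α := by linarith
  set s := Real.sqrt α with hsdef
  have hs0 : 0 < s := Real.sqrt_pos.mpr hα0
  have hs2 : s^2 = α := Real.sq_sqrt hα0.le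
  set G := Real.Gamma (α+1) with hGdef
  have hG : 0 < G := Real.Gamma_pos_of_pos (by linarith)
  set q := (2:ℝ) ^ (-α) with hqdef
  have hq : 0 < q := Real.rpow_pos_of_pos two_pos _
  set C := Cconst α with hCdef
  set C' := Cconst (α-1) with hC'def
  have h1 : (α - 1) * C' ≤ C - G * q := keyStep hα
  have h2 : 2 * G ≤ C := C_ge (by linarith)
  have hGa : Real.Gamma α = G / α := by
    rw [hGdef, Real.Gamma_add_one (ne_of_gt hα0)]
    field_simp
  have h3 : C ≤ 2 * G + G / α := by
    have := C_le (by linarith : (1:ℝ) ≤ α)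
    rw [hGa] at this
    exact this
  have hC0 : (0:ℝ) ≤ C := Cnonneg α
  have hC52 : C ≤ 5/2 * G := by
    have : G / α ≤ G / 2 := by
      apply div_le_div_of_nonneg_left hG.le (by norm_num) hα
    linarith
  have hC'0 : (0:ℝ) ≤ C' := Cnonneg (α-1)
  have hKey : (1 + 2*α) * (C - G * q) ≤ (2 + 4/s) * (α - 1) * C := by
    rcases le_or_gt (3*s) (4*(α-1)) with hB|hB
    · have h4 : (3:ℝ) ≤ 4*(α-1)/s := (le_div_iff₀ hs0).mpr (by linarith)
      have hintA := mul_le_mul_of_nonneg_right h4 hC0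
      have hGq : 0 ≤ G * q := mul_nonneg hG.le hq.le
      have hexp : (2 + 4/s) * (α - 1) * C = 2*(α-1)*C + (4*(α-1)/s) * C := by ring
      rw [hexp]
      linarith [hintA, hGq, mul_nonneg (mul_nonneg hα0.le hG.le) hq.le]
    · have hA1 : (1:ℝ) ≤ α - 1 := by linarith
      have h16 : 16*(α-1)^2 < 9*α := by
        nlinarith [mul_pos (sub_pos.mpr hB) (show (0:ℝ) < 3*s + 4*(α-1) by positivity)]
      have hα3 : α < 3 := by nlinarith
      have hsq : (11*s)^2 ≤ (16*(α-1))^2 := by nlinarith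
      have h11 : 11 * s ≤ 16 * (α-1) := by
        nlinarith [hsq, mul_pos hs0 hs0]
      have h4 : (11:ℝ)/4 ≤ 4*(α-1)/s := (le_div_iff₀ hs0).mpr (by linarith)
      have hq5 : (1:ℝ)/8 ≤ q := by
        have hmono : (2:ℝ)^(-(3:ℝ)) ≤ (2:ℝ)^(-α) :=
          Real.rpow_le_rpow_of_exponent_le one_le_two (by linarith)
        have h23 : (2:ℝ)^(-(3:ℝ)) = 1/8 := by
          rw [show ((-3):ℝ) = ((-3 : ℤ):ℝ) by norm_num, Real.rpow_intCast]
          norm_num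
        rw [hqdef, ← h23]
        exact hmono
      have hintA := mul_le_mul_of_nonneg_right h4 hC0
      have hintB : 5/8 * G ≤ (1+2*α) * (G * q) := by
        have e1 : 5 * (G * (1/8)) ≤ (1+2*α) * (G * q) := by
          apply mul_le_mul (by linarith) (by nlinarith) (mul_nonneg hG.le (by norm_num)) (by linarith)
        linarith
      have hexp : (2 + 4/s) * (α - 1) * C = 2*(α-1)*C + (4*(α-1)/s) * C := by ring
      rw [hexp]
      linarith [hintA, hintB, hC52]
  have hmul := mul_le_mul_of_nonneg_left h1 (show (0:ℝ) ≤ 1 + 2*α by linarith)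
  have hdiv : (α - 1) * ((1+2*α) * C') ≤ (α - 1) * ((2 + 4/s) * C) := by
    nlinarith [hmul, hKey]

  exact le_of_mul_le_mul_left hdiv (by linarith)

lemma H1_le {α x : ℝ} (hα : 2 ≤ α) (hx : 0 ≤ x) : H1fun α x ≤ Cconst (α-1) / 2 := by
  have h0 : (0:ℝ) < α - 1 := by linarith
  have hCdiv : Cconst (α-1) / 2 = ∫ t in Ioi (0:ℝ), (1/2) * (t ^ (α-1) / Real.sinh t) := by
    rw [integral_const_mul]; unfold Cconst; ring
  rw [H1fun, hCdiv]
  apply integral_mono_of_nonneg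
  · refine (ae_restrict_iff' measurableSet_Ioi).mpr (ae_of_all _ fun t ht => ?_)
    have ht' : (0:ℝ) < t := ht
    exact mul_nonneg (wnonneg ht) (div_nonneg hx (by positivity))
  · exact ((integrableW h0).const_mul _)
  · refine (ae_restrict_iff' measurableSet_Ioi).mpr (ae_of_all _ fun t ht => ?_)
    have ht' : (0:ℝ) < t := ht
    have hS := Real.sinh_pos_iff.mpr ht'
    have hb : t ^ α = t ^ (α-1) * t := by
      rw [← Real.rpow_add_one (ne_of_gt ht') (α - 1)]; ring_nf
    have hxt : x / (x^2 + t^2) ≤ 1 / (2*t) := by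
      rw [div_le_div_iff₀ (by positivity) (by positivity)]
      nlinarith [sq_nonneg (x - t)]
    have hw : (0:ℝ) ≤ t ^ α / Real.sinh t := wnonneg ht
    calc t ^ α / Real.sinh t * (x / (x^2 + t^2))
        ≤ t ^ α / Real.sinh t * (1 / (2*t)) := mul_le_mul_of_nonneg_left hxt hw
      _ = (1/2) * (t ^ (α-1) / Real.sinh t) := by
          rw [hb]; field_simp

lemma half_le {α : ℝ} (hα : 2 ≤ α) :
    Cconst (α-1) / 2 ≤ (Cconst α / (1 + 2*α)) * (1 + 2 / Real.sqrt α) := by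
  have hs0 : 0 < Real.sqrt α := Real.sqrt_pos.mpr (by linarith)
  have h12 : (0:ℝ) < 1 + 2*α := by linarith
  have hr := ratioUpper hα
  have he : (Cconst α / (1 + 2*α)) * (1 + 2 / Real.sqrt α)
      = Cconst α * (1 + 2 / Real.sqrt α) / (1 + 2*α) := by ring
  rw [he, div_le_div_iff₀ two_pos h12]
  have he2 : Cconst α * (1 + 2 / Real.sqrt α) * 2 = (2 + 4 / Real.sqrt α) * Cconst α := by ring
  rw [he2]
  linarith [hr]

set_option maxHeartbeats 1000000 in
lemma H1_lower {α : ℝ} (hα : 2 ≤ α) :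
    (Cconst α / (1 + 2*α)) * (1 - 1 / Real.sqrt α) ≤ H1fun α α := by
  have hα0 : (0:ℝ) < α := by linarith
  set s := Real.sqrt α with hsdef
  have hs0 : 0 < s := Real.sqrt_pos.mpr hα0
  have hs2 : s^2 = α := Real.sq_sqrt hα0.le
  have hs1 : 1 ≤ s := by nlinarith
  have hsle : s ≤ α := by nlinarith
  set M0 := Cconst α with hM0def
  set M2 := Cconst (α+2) with hM2def
  have hG : 0 < Real.Gamma (α+1) := Real.Gamma_pos_of_pos (by linarith)
  have hM0 : 0 < M0 := lt_of_lt_of_le (by linarith) (C_ge (by linarith))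
  have hM2nn : 0 ≤ M2 := Cnonneg _
  have hM2le : M2 ≤ (α+1) * ((α+2) * M0) := by
    have h1 : Cconst (α+2) ≤ (α+2) * Cconst (α+1) := by
      have := stepUp (by linarith : (1:ℝ) ≤ α+1)
      have he : α + 1 + 1 = α + 2 := by ring
      rwa [he] at this
    have h2 : Cconst (α+1) ≤ (α+1) * Cconst α := stepUp (by linarith)
    calc M2 ≤ (α+2) * Cconst (α+1) := h1
      _ ≤ (α+2) * ((α+1) * M0) := by
          apply mul_le_mul_of_nonneg_left h2 (by linarith)
      _ = (α+1) * ((α+2) * M0) := by ring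
  clear_value s M0 M2
  set s₀ := M2 / M0 with hs₀def
  have hs₀nn : 0 ≤ s₀ := div_nonneg hM2nn hM0.le
  set P := α^2 + s₀ with hPdef
  clear_value s₀ P
  have hP : 0 < P := by rw [hPdef]; nlinarith [hs₀nn, pow_pos hα0 2]
  have hPne : P ≠ 0 := ne_of_gt hP
  -- final arithmetic
  have hPle : P ≤ 2*α^2 + 3*α + 2 := by
    have h9 : s₀ ≤ (α+1)*(α+2) := by
      rw [hs₀def, div_le_iff₀ hM0]; nlinarith [hM2le]
    rw [hPdef]; nlinarith [h9]
  have hQpos : (0:ℝ) < 2*α^2 + 3*α + 2 := by positivity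
  have hstep1 : α * M0 / (2*α^2 + 3*α + 2) ≤ α * M0 / P :=
    div_le_div_of_nonneg_left (mul_nonneg hα0.le hM0.le) hP hPle
  have hstep2 : (M0 / (1 + 2*α)) * (1 - 1/s) ≤ α * M0 / (2*α^2 + 3*α + 2) := by
    have h12 : (0:ℝ) < 1 + 2*α := by linarith
    have he : (M0 / (1 + 2*α)) * (1 - 1/s) = M0 * (s - 1) / ((1 + 2*α) * s) := by
      field_simp
    rw [he, div_le_div_iff₀ (mul_pos h12 hs0) hQpos]
    have hinner : (s - 1) * (2*α^2 + 3*α + 2) ≤ α * (1 + 2*α) * s := by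
      nlinarith [mul_le_mul_of_nonneg_right hsle (by linarith : (0:ℝ) ≤ 2*α + 2)]
    nlinarith [mul_le_mul_of_nonneg_left hinner hM0.le]
  -- integrability of the H1 integrand at x = α
  have hmeasH : AEStronglyMeasurable (fun t : ℝ => t ^ α / Real.sinh t * (α / (α^2 + t^2)))
      (volume.restrict (Ioi 0)) := by
    apply ContinuousOn.aestronglyMeasurable _ measurableSet_Ioi
    apply (contOnW α).mul
    apply ContinuousOn.div continuousOn_const (by fun_prop)
    intro t ht
    have ht' : (0:ℝ) < t := ht
    positivity
  have hintH : IntegrableOn (fun t : ℝ => t ^ α / Real.sinh t * (α / (α^2 + t^2)))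
      (Ioi (0:ℝ)) := by
    refine Integrable.mono' (integrableW hα0) hmeasH ?_
    refine (ae_restrict_iff' measurableSet_Ioi).mpr (ae_of_all _ fun t ht => ?_)
    have ht' : (0:ℝ) < t := ht
    have hw : (0:ℝ) ≤ t ^ α / Real.sinh t := wnonneg ht
    have hfr : α / (α^2 + t^2) ≤ 1 := by
      rw [div_le_one (by positivity)]; nlinarith
    rw [Real.norm_eq_abs, abs_of_nonneg (mul_nonneg hw (by positivity))]
    nlinarith [mul_le_mul_of_nonneg_left hfr hw]
  have hintT : IntegrableOn (fun t : ℝ =>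
      (α/P + α*s₀/P^2) * (t ^ α / Real.sinh t) - (α/P^2) * (t ^ (α+2) / Real.sinh t))
      (Ioi (0:ℝ)) :=
    ((integrableW hα0).const_mul _).sub ((integrableW (by linarith : (0:ℝ) < α+2)).const_mul _)
  have hmono : ∫ t in Ioi (0:ℝ),
        ((α/P + α*s₀/P^2) * (t ^ α / Real.sinh t) - (α/P^2) * (t ^ (α+2) / Real.sinh t))
      ≤ H1fun α α := by
    rw [H1fun]
    refine setIntegral_mono_on hintT hintH measurableSet_Ioi fun t ht => ?_
    have ht' : (0:ℝ) < t := ht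
    have hS := Real.sinh_pos_iff.mpr ht'
    have hw : (0:ℝ) ≤ t ^ α / Real.sinh t := wnonneg ht
    have hb2 : t ^ (α+2) = t ^ α * t^2 := by
      rw [Real.rpow_add ht' α 2, show ((2:ℝ)) = ((2:ℕ):ℝ) by norm_num, Real.rpow_natCast]
    have htan : α/P - α/P^2 * (t^2 - s₀) ≤ α / (α^2 + t^2) := by
      have hd : α^2 + t^2 = P + (t^2 - s₀) := by rw [hPdef]; ring
      have hPd : (0:ℝ) < P + (t^2 - s₀) := by rw [← hd]; positivity
      have e : α/P - α/P^2 * (t^2 - s₀) = α*(P - (t^2 - s₀))/P^2 := by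
        field_simp [hPne]
      rw [e, hd, div_le_div_iff₀ (pow_pos hP 2) hPd]
      nlinarith [sq_nonneg (t^2 - s₀), hα0.le]
    have hexp : (α/P + α*s₀/P^2) * (t ^ α / Real.sinh t) - (α/P^2) * (t ^ (α+2) / Real.sinh t)
        = (t ^ α / Real.sinh t) * (α/P - α/P^2 * (t^2 - s₀)) := by
      rw [hb2]; field_simp [hPne, ne_of_gt hS]; ring
    rw [hexp]
    exact mul_le_mul_of_nonneg_left htan hw
  have hval : ∫ t in Ioi (0:ℝ),
        ((α/P + α*s₀/P^2) * (t ^ α / Real.sinh t) - (α/P^2) * (t ^ (α+2) / Real.sinh t))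
      = (α/P + α*s₀/P^2) * M0 - (α/P^2) * M2 := by
    rw [integral_sub ((integrableW hα0).const_mul _)
      ((integrableW (by linarith : (0:ℝ) < α+2)).const_mul _),
      integral_const_mul, integral_const_mul, hM0def, hM2def]
    simp only [Cconst]
  have hval2 : (α/P + α*s₀/P^2) * M0 - (α/P^2) * M2 = α * M0 / P := by
    have hM2eq : M2 = s₀ * M0 := by
      rw [hs₀def, div_mul_cancel₀ M2 (ne_of_gt hM0)]
    rw [hM2eq]
    field_simp [hPne]
    ring
  calc (M0 / (1 + 2*α)) * (1 - 1/s) ≤ α * M0 / (2*α^2 + 3*α + 2) := hstep2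
    _ ≤ α * M0 / P := hstep1
    _ = (α/P + α*s₀/P^2) * M0 - (α/P^2) * M2 := hval2.symm
    _ ≤ H1fun α α := by rw [← hval]; exact hmono

end Stmt3Aux

theorem stmt_3 (α : ℝ) (hα : 2 ≤ α) :
    (Cconst α / (1 + 2 * α)) * (1 - 1 / Real.sqrt α) ≤ H1fun α α ∧
    H1fun α α ≤ (⨆ x : Set.Ici (0:ℝ), H1fun α (x : ℝ)) ∧
    (⨆ x : Set.Ici (0:ℝ), H1fun α (x : ℝ)) ≤
      (Cconst α / (1 + 2 * α)) * (1 + 2 / Real.sqrt α) := by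
  haveI : Nonempty ↥(Set.Ici (0:ℝ)) := ⟨⟨0, Set.mem_Ici.mpr (le_refl 0)⟩⟩
  have hbdd : BddAbove (Set.range fun x : Set.Ici (0:ℝ) => H1fun α (x:ℝ)) := by
    refine ⟨Cconst (α-1) / 2, ?_⟩
    rintro y ⟨x, rfl⟩
    exact Stmt3Aux.H1_le hα x.2
  refine ⟨Stmt3Aux.H1_lower hα, le_ciSup hbdd ⟨α, Set.mem_Ici.mpr (by linarith)⟩, ?_⟩
  exact ciSup_le fun x => (Stmt3Aux.H1_le hα x.2).trans (Stmt3Aux.half_le hα)
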